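/- arXiv:1307.1434 — 5 statements merged into one kernel-verified Lean document; each statement's English description precedes it below -/
import Mathlib

section
/- Let n ≥ 2 and let Ω ⊂ ℝⁿ be a nonempty bounded open set. Then there exists a constant C > 0 such that for every smooth vector field v : ℝⁿ → ℝⁿ with compact support contained in Ω one has ‖Grad v‖_{L²(Ω)} ≤ C ‖dev sym Grad v‖_{L²(Ω)}. (Trace-free Korn first inequality, Lemma 4.2, in the full-boundary-condition case realized by compactly supported fields.) -/
open MeasureTheory Real Matrix

attribute [local instance] Matrix.frobeniusNormedAddCommGroup Matrix.frobeniusNormedSpace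

noncomputable section

/-- Deviatoric (trace-free) part of a square matrix. -/
def dev {n : ℕ} (X : Matrix (Fin n) (Fin n) ℝ) : Matrix (Fin n) (Fin n) ℝ :=
  X - (Matrix.trace X / (n : ℝ)) • (1 : Matrix (Fin n) (Fin n) ℝ)

/-- Symmetric part of a square matrix. -/
def symP {n : ℕ} (X : Matrix (Fin n) (Fin n) ℝ) : Matrix (Fin n) (Fin n) ℝ :=
  (1 / 2 : ℝ) • (X + Xᵀ)

/-- Squared Frobenius norm. -/
def frobSq {n : ℕ} (X : Matrix (Fin n) (Fin n) ℝ) : ℝ := ∑ i, ∑ j, (X i j) ^ 2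

/-- Frobenius norm. -/
def frobN {n : ℕ} (X : Matrix (Fin n) (Fin n) ℝ) : ℝ := Real.sqrt (frobSq X)

/-- Partial derivative ∂ⱼ f at x. -/
def pd {n : ℕ} (j : Fin n) (f : (Fin n → ℝ) → ℝ) (x : Fin n → ℝ) : ℝ :=
  fderiv ℝ f x (Pi.single j 1)

/-- Row-wise divergence of a tensor field: (Div T)ᵢ = Σⱼ ∂ⱼ Tᵢⱼ. -/
def divT {n : ℕ} (T : (Fin n → ℝ) → Matrix (Fin n) (Fin n) ℝ) (x : Fin n → ℝ) :
    Fin n → ℝ :=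
  fun i => ∑ j, pd j (fun y => T y i j) x

/-- Row-wise rotation (curl) of a 3×3 tensor field. -/
def curl3 (T : (Fin 3 → ℝ) → Matrix (Fin 3) (Fin 3) ℝ) (x : Fin 3 → ℝ) :
    Matrix (Fin 3) (Fin 3) ℝ :=
  Matrix.of fun i =>
    ![pd 1 (fun y => T y i 2) x - pd 2 (fun y => T y i 1) x,
      pd 2 (fun y => T y i 0) x - pd 0 (fun y => T y i 2) x,
      pd 0 (fun y => T y i 1) x - pd 1 (fun y => T y i 0) x]

/-- Jacobian matrix of a vector field: (Grad v)ᵢⱼ = ∂ⱼ vᵢ. -/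
def gradM {n : ℕ} (v : (Fin n → ℝ) → (Fin n → ℝ)) (x : Fin n → ℝ) :
    Matrix (Fin n) (Fin n) ℝ :=
  Matrix.of fun i j => pd j (fun y => v y i) x

/-! ### Auxiliary lemmas -/

namespace DevSymAux

variable {n : ℕ}

lemma contDiff_pd (j : Fin n) {f : (Fin n → ℝ) → ℝ} (hf : ContDiff ℝ (⊤ : ℕ∞) f) :
    ContDiff ℝ (⊤ : ℕ∞) (fun y => pd j f y) :=
  (hf.fderiv_right (m := (⊤ : ℕ∞)) (by simp)).clm_apply contDiff_const

lemma support_pd (j : Fin n) (f : (Fin n → ℝ) → ℝ) :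
    Function.support (fun y => pd j f y) ⊆ tsupport f := by
  intro x hx
  apply support_fderiv_subset ℝ (f := f)
  intro h
  exact hx (by simp [pd, h])

lemma hasCompactSupport_pd (j : Fin n) {f : (Fin n → ℝ) → ℝ} (hf : HasCompactSupport f) :
    HasCompactSupport (fun y => pd j f y) :=
  (hf.fderiv (𝕜 := ℝ)).comp_left (g := fun L : (Fin n → ℝ) →L[ℝ] ℝ => L (Pi.single j 1)) (by simp)

lemma pd_comm {f : (Fin n → ℝ) → ℝ} (hf : ContDiff ℝ (⊤ : ℕ∞) f) (i j : Fin n) (x : Fin n → ℝ) :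
    pd j (fun y => pd i f y) x = pd i (fun y => pd j f y) x := by
  have hsymm : IsSymmSndFDerivAt ℝ f x := hf.contDiffAt.isSymmSndFDerivAt (by rw [minSmoothness_of_isRCLikeNormedField]; exact WithTop.coe_le_coe.mpr (le_top : (2:ℕ∞) ≤ ⊤))
  have hdf : Differentiable ℝ (fderiv ℝ f) :=
    (hf.fderiv_right (m := (⊤ : ℕ∞)) (by simp)).differentiable (by simp)
  have key : ∀ w u : Fin n → ℝ, fderiv ℝ (fun y => fderiv ℝ f y u) x w
      = fderiv ℝ (fderiv ℝ f) x w u := by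
    intro w u
    rw [fderiv_clm_apply (hdf x) (differentiableAt_const _)]
    simp
  simp only [pd]
  rw [key, key, hsymm.eq]

lemma ibp {f g : (Fin n → ℝ) → ℝ} (hf : ContDiff ℝ (⊤ : ℕ∞) f) (hg : ContDiff ℝ (⊤ : ℕ∞) g)
    (hcf : HasCompactSupport f) (w : Fin n) :
    ∫ x, f x * pd w g x = - ∫ x, pd w f x * g x := by
  simp only [pd]
  apply integral_mul_fderiv_eq_neg_fderiv_mul_of_integrable
  · exact ((contDiff_pd w hf).continuous.mul hg.continuous).integrable_of_hasCompactSupport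
      ((hasCompactSupport_pd w hcf).mul_right)
  · exact (hf.continuous.mul (contDiff_pd w hg).continuous).integrable_of_hasCompactSupport
      hcf.mul_right
  · exact (hf.continuous.mul hg.continuous).integrable_of_hasCompactSupport hcf.mul_right
  · exact fun x _ => hf.differentiable (by simp) x
  · exact fun x _ => hg.differentiable (by simp) x

lemma key_integral {f g : (Fin n → ℝ) → ℝ} (hf : ContDiff ℝ (⊤ : ℕ∞) f) (hg : ContDiff ℝ (⊤ : ℕ∞) g)
    (hcf : HasCompactSupport f) (i j : Fin n) :
    ∫ x, pd j f x * pd i g x = ∫ x, pd i f x * pd j g x := by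
  have h1 := ibp hf (contDiff_pd i hg) hcf j
  have h2 := ibp hf (contDiff_pd j hg) hcf i
  have h3 : ∀ x, pd j (fun y => pd i g y) x = pd i (fun y => pd j g y) x :=
    fun x => pd_comm hg i j x
  simp only [h3] at h1
  have := h1.symm.trans h2
  linarith [this]

lemma frobSq_dev (hn : (n:ℝ) ≠ 0) (X : Matrix (Fin n) (Fin n) ℝ) :
    frobSq (dev X) = frobSq X - (Matrix.trace X)^2 / n := by
  set t := Matrix.trace X / n with ht
  have h : ∀ i j, dev X i j = X i j - t * (if i = j then 1 else 0) := by
    intro i j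
    simp [dev, Matrix.sub_apply, Matrix.smul_apply, Matrix.one_apply, smul_eq_mul, ht]
  have h2 : ∀ i j : Fin n, (dev X i j)^2
      = (X i j)^2 - (if i = j then 2*t*X i j else 0) + (if i = j then t^2 else 0) := by
    intro i j; rw [h]; split <;> ring
  have expand : ∀ i : Fin n, ∑ j, (dev X i j)^2 = (∑ j, (X i j)^2) - 2*t*(X i i) + t^2 := by
    intro i
    simp only [h2]
    rw [Finset.sum_add_distrib, Finset.sum_sub_distrib]
    simp [Finset.sum_ite_eq]
  have htr : Matrix.trace X = ∑ i, X i i := rfl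
  calc frobSq (dev X) = ∑ i, ((∑ j, (X i j)^2) - 2*t*(X i i) + t^2) := by
        unfold frobSq
        exact Finset.sum_congr rfl fun i _ => expand i
    _ = frobSq X - 2*t*(Matrix.trace X) + n * t^2 := by
        rw [Finset.sum_add_distrib, Finset.sum_sub_distrib, Finset.sum_const, Finset.card_univ]
        simp [frobSq, htr, Finset.mul_sum, nsmul_eq_mul]
    _ = frobSq X - (Matrix.trace X)^2 / n := by
        rw [ht]; field_simp; ring

lemma frobSq_symP (G : Matrix (Fin n) (Fin n) ℝ) :
    frobSq (symP G) = (1/2)*frobSq G + (1/2)*∑ i, ∑ j, G i j * G j i := by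
  have h2 : ∀ i j : Fin n, (symP G i j)^2
      = (1/4)*(G i j)^2 + (1/2)*(G i j * G j i) + (1/4)*(G j i)^2 := by
    intro i j
    have : symP G i j = (1/2) * (G i j + G j i) := by
      simp [symP, Matrix.smul_apply, Matrix.add_apply, Matrix.transpose_apply, smul_eq_mul]
    rw [this]; ring
  have swap : ∑ i, ∑ j, (G j i)^2 = frobSq G := by
    rw [Finset.sum_comm]; rfl
  calc frobSq (symP G)
      = ∑ i, ∑ j, ((1/4)*(G i j)^2 + (1/2)*(G i j * G j i) + (1/4)*(G j i)^2) := by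
        unfold frobSq
        exact Finset.sum_congr rfl fun i _ => Finset.sum_congr rfl fun j _ => h2 i j
    _ = (1/4)*(∑ i, ∑ j, (G i j)^2) + (1/2)*(∑ i, ∑ j, G i j * G j i)
          + (1/4)*(∑ i, ∑ j, (G j i)^2) := by
        simp [Finset.sum_add_distrib, Finset.mul_sum]
    _ = (1/2)*frobSq G + (1/2)*∑ i, ∑ j, G i j * G j i := by
        rw [swap]; unfold frobSq; ring

lemma trace_symP (G : Matrix (Fin n) (Fin n) ℝ) : Matrix.trace (symP G) = Matrix.trace G := by
  unfold Matrix.trace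
  refine Finset.sum_congr rfl fun i _ => ?_
  simp [symP, Matrix.diag, Matrix.smul_apply, Matrix.add_apply, Matrix.transpose_apply,
    smul_eq_mul]
  ring

lemma frobSq_dev_symP (hn : (n:ℝ) ≠ 0) (G : Matrix (Fin n) (Fin n) ℝ) :
    frobSq (dev (symP G)) = (1/2)*frobSq G + (1/2)*(∑ i, ∑ j, G i j * G j i)
      - (Matrix.trace G)^2 / n := by
  rw [frobSq_dev hn, frobSq_symP, trace_symP]

lemma integral_double_sum {F : Fin n → Fin n → (Fin n → ℝ) → ℝ}
    (hF : ∀ i j, Integrable (F i j) (volume : Measure (Fin n → ℝ))) :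
    ∫ x, ∑ i, ∑ j, F i j x = ∑ i, ∑ j, ∫ x, F i j x := by
  rw [integral_finset_sum _ (fun i _ => integrable_finset_sum _ (fun j _ => hF i j))]
  exact Finset.sum_congr rfl fun i _ => integral_finset_sum _ (fun j _ => hF i j)

end DevSymAux

open DevSymAux

/-- Trace-free Korn first inequality (Lemma 4.2, full boundary condition realized by
compactly supported fields). -/
theorem devSymGrad_inequality (n : ℕ) (hn : 2 ≤ n) (Ω : Set (Fin n → ℝ))
    (hne : Ω.Nonempty) (ho : IsOpen Ω) (hb : Bornology.IsBounded Ω) :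
    ∃ C > (0 : ℝ), ∀ v : (Fin n → ℝ) → (Fin n → ℝ),
      ContDiff ℝ (⊤ : ℕ∞) v → HasCompactSupport v → tsupport v ⊆ Ω →
      (∫ x in Ω, frobSq (gradM v x)) ^ ((1 : ℝ) / 2) ≤
        C * (∫ x in Ω, frobSq (dev (symP (gradM v x)))) ^ ((1 : ℝ) / 2) := by
  refine ⟨(2:ℝ) ^ ((1:ℝ)/2), Real.rpow_pos_of_pos two_pos _, ?_⟩
  intro v hv hcs hsupp
  have hn0 : (n:ℝ) ≠ 0 := by
    have : 0 < n := by omega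
    exact_mod_cast this.ne'
  -- components
  set u : Fin n → (Fin n → ℝ) → ℝ := fun i y => v y i with hu_def
  have hu : ∀ i, ContDiff ℝ (⊤ : ℕ∞) (u i) := fun i => contDiff_pi.1 hv i
  have hcu : ∀ i, HasCompactSupport (u i) := fun i =>
    hcs.comp_left (g := fun p : Fin n → ℝ => p i) rfl
  -- vanishing outside Ω
  have hpd0 : ∀ (i j : Fin n) (x : Fin n → ℝ), x ∉ Ω → pd j (u i) x = 0 := by
    intro i j x hx
    by_contra h
    have hx1 : x ∈ tsupport (u i) := support_pd j (u i) h
    have hsub : Function.support (u i) ⊆ Function.support v := by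
      intro y hy h0
      exact hy (by simp [hu_def, h0])
    exact hx (hsupp ((closure_mono hsub) hx1))
  have hG0 : ∀ x : Fin n → ℝ, x ∉ Ω → gradM v x = 0 := by
    intro x hx
    ext i j
    exact hpd0 i j x hx
  -- move to integrals over the whole space
  have e1 : ∫ x in Ω, frobSq (gradM v x) = ∫ x, frobSq (gradM v x) :=
    setIntegral_eq_integral_of_forall_compl_eq_zero fun x hx => by
      rw [hG0 x hx]; simp [frobSq]
  have e2 : ∫ x in Ω, frobSq (dev (symP (gradM v x)))
      = ∫ x, frobSq (dev (symP (gradM v x))) :=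
    setIntegral_eq_integral_of_forall_compl_eq_zero fun x hx => by
      rw [hG0 x hx]; simp [frobSq, dev, symP]
  -- integrability of products of partial derivatives
  have hint : ∀ i j k l : Fin n,
      Integrable (fun x => pd j (u i) x * pd l (u k) x) (volume : Measure (Fin n → ℝ)) :=
    fun i j k l =>
      ((contDiff_pd j (hu i)).continuous.mul
        (contDiff_pd l (hu k)).continuous).integrable_of_hasCompactSupport
        ((hasCompactSupport_pd j (hcu i)).mul_right)
  -- key quantities
  set Fg : (Fin n → ℝ) → ℝ := fun x => frobSq (gradM v x) with hFg_def
  set Aq : (Fin n → ℝ) → ℝ := fun x => ∑ i, ∑ j, pd j (u i) x * pd i (u j) x with hAq_def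
  set Dq : (Fin n → ℝ) → ℝ := fun x => ∑ i, ∑ j, pd i (u i) x * pd j (u j) x with hDq_def
  have hFg_eq : ∀ x, Fg x = ∑ i, ∑ j, pd j (u i) x * pd j (u i) x := by
    intro x
    simp only [hFg_def, frobSq, pow_two]
    rfl
  have hFg_int : Integrable Fg (volume : Measure (Fin n → ℝ)) := by
    have : Fg = fun x => ∑ i, ∑ j, pd j (u i) x * pd j (u i) x := funext hFg_eq
    rw [this]
    exact integrable_finset_sum _ fun i _ => integrable_finset_sum _ fun j _ => hint i j i j
  have hAq_int : Integrable Aq (volume : Measure (Fin n → ℝ)) :=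
    integrable_finset_sum _ fun i _ => integrable_finset_sum _ fun j _ => hint i j j i
  have hDq_int : Integrable Dq (volume : Measure (Fin n → ℝ)) :=
    integrable_finset_sum _ fun i _ => integrable_finset_sum _ fun j _ => hint i i j j
  -- pointwise expansion of the deviatoric symmetric part
  have hDS : ∀ x, frobSq (dev (symP (gradM v x)))
      = (1/2)*Fg x + (1/2)*Aq x - (1/n)*Dq x := by
    intro x
    rw [frobSq_dev_symP hn0]
    have h1 : (∑ i, ∑ j, gradM v x i j * gradM v x j i) = Aq x := rfl
    have h2 : (Matrix.trace (gradM v x))^2 = Dq x := by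
      have htr : Matrix.trace (gradM v x) = ∑ i, pd i (u i) x := rfl
      rw [htr, pow_two, Finset.sum_mul_sum]
    rw [h1, h2]
    ring
  -- the integration-by-parts identity ∫ Aq = ∫ Dq
  have keyA : ∫ x, Aq x = ∫ x, Dq x := by
    rw [hAq_def, hDq_def]
    rw [integral_double_sum (fun i j => hint i j j i),
        integral_double_sum (fun i j => hint i i j j)]
    exact Finset.sum_congr rfl fun i _ => Finset.sum_congr rfl fun j _ =>
      key_integral (hu i) (hu j) (hcu i) i j
  -- nonnegativity facts
  have hDq_nonneg : 0 ≤ ∫ x, Dq x := by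
    refine integral_nonneg fun x => ?_
    have : Dq x = (∑ i, pd i (u i) x)^2 := by
      rw [hDq_def, pow_two, Finset.sum_mul_sum]
    rw [this]
    exact sq_nonneg _
  have hFg_nonneg : 0 ≤ ∫ x, Fg x := by
    refine integral_nonneg fun x => ?_
    rw [hFg_eq x]
    exact Finset.sum_nonneg fun i _ => Finset.sum_nonneg fun j _ => mul_self_nonneg _
  -- linearity computation
  have hsplit : ∫ x, frobSq (dev (symP (gradM v x)))
      = (1/2) * (∫ x, Fg x) + (1/2) * (∫ x, Aq x) - (1/n) * (∫ x, Dq x) := by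
    calc ∫ x, frobSq (dev (symP (gradM v x)))
        = ∫ x, ((1/2)*Fg x + (1/2)*Aq x - (1/n)*Dq x) :=
          integral_congr_ae (Filter.Eventually.of_forall hDS)
      _ = (∫ x, ((1/2)*Fg x + (1/2)*Aq x)) - ∫ x, (1/n)*Dq x :=
          integral_sub ((hFg_int.const_mul _).add (hAq_int.const_mul _))
            (hDq_int.const_mul _)
      _ = ((∫ x, (1/2)*Fg x) + ∫ x, (1/2)*Aq x) - ∫ x, (1/n)*Dq x := by
          rw [integral_add (hFg_int.const_mul _) (hAq_int.const_mul _)]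
      _ = (1/2) * (∫ x, Fg x) + (1/2) * (∫ x, Aq x) - (1/n) * (∫ x, Dq x) := by
          simp only [← smul_eq_mul, integral_smul]
  -- the main estimate
  have hmain : ∫ x, Fg x ≤ 2 * ∫ x, frobSq (dev (symP (gradM v x))) := by
    have h2n : (2:ℝ) ≤ n := by exact_mod_cast hn
    have h1n : (1:ℝ)/n ≤ 1/2 := one_div_le_one_div_of_le two_pos h2n
    have hP : (1/(n:ℝ)) * (∫ x, Dq x) ≤ (1/2) * (∫ x, Dq x) :=
      mul_le_mul_of_nonneg_right h1n hDq_nonneg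
    rw [hsplit, keyA]
    linarith [hP]
  -- conclude
  rw [e1, e2]
  have hb2 : 0 ≤ ∫ x, frobSq (dev (symP (gradM v x))) := by nlinarith [hmain, hFg_nonneg]
  calc (∫ x, Fg x) ^ ((1:ℝ)/2)
      ≤ (2 * ∫ x, frobSq (dev (symP (gradM v x)))) ^ ((1:ℝ)/2) :=
        Real.rpow_le_rpow hFg_nonneg hmain (by norm_num)
    _ = (2:ℝ) ^ ((1:ℝ)/2) * (∫ x, frobSq (dev (symP (gradM v x)))) ^ ((1:ℝ)/2) :=
        Real.mul_rpow (by norm_num) hb2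
end
end

section
/- Let T : ℝ³ → ℝ^{3×3} be a smooth tensor field with compact support. If sym T(x) = 0 and Curl T(x) = 0 for all x ∈ ℝ³, then T ≡ 0. (Triviality of the kernel of the Sym-Curl inequality on compactly supported smooth fields, Section 6.2.) -/
open MeasureTheory Real Matrix

attribute [local instance] Matrix.frobeniusNormedAddCommGroup Matrix.frobeniusNormedSpace

noncomputable section

lemma pd_neg (f : (Fin 3 → ℝ) → ℝ) (j : Fin 3) (x : Fin 3 → ℝ) :
    pd j (fun y => -(f y)) x = -pd j f x := by
  unfold pd
  rw [fderiv_fun_neg]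
  simp

lemma pd_zero (j : Fin 3) (x : Fin 3 → ℝ) :
    pd j (fun _ : Fin 3 → ℝ => (0:ℝ)) x = 0 := by
  unfold pd
  simp

lemma entry_contDiff (T : (Fin 3 → ℝ) → Matrix (Fin 3) (Fin 3) ℝ)
    (hT : ContDiff ℝ (⊤ : ℕ∞) T) (i j : Fin 3) : ContDiff ℝ (⊤ : ℕ∞) (fun y => T y i j) := by
  let E : Matrix (Fin 3) (Fin 3) ℝ →ₗ[ℝ] ℝ :=
    { toFun := fun X => X i j,
      map_add' := fun X Y => rfl,
      map_smul' := fun c X => rfl }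
  exact (LinearMap.toContinuousLinearMap E).contDiff.comp hT

lemma zero_of_pd (f : (Fin 3 → ℝ) → ℝ) (hf : Differentiable ℝ f)
    (hsupp : HasCompactSupport f) (h : ∀ x j, pd j f x = 0) : ∀ x, f x = 0 := by
  have hfd : ∀ x, fderiv ℝ f x = 0 := by
    intro x
    ext v
    have hv : v = ∑ j, (v j) • (Pi.single j 1 : Fin 3 → ℝ) := by
      funext k
      simp [Finset.sum_apply, Pi.single_apply]
    conv_lhs => rw [hv]
    rw [map_sum]
    simp only [_root_.map_smul]
    have hz : ∀ j : Fin 3, fderiv ℝ f x (Pi.single j 1) = 0 := fun j => h x j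
    simp [hz]
  have hconst : ∀ x y, f x = f y := fun x y =>
    is_const_of_fderiv_eq_zero hf hfd x y
  obtain ⟨x₀, hx₀⟩ : ∃ x₀, x₀ ∉ tsupport f := by
    by_contra hc
    push_neg at hc
    have huniv : tsupport f = Set.univ := Set.eq_univ_of_forall hc
    have hcpt : IsCompact (Set.univ : Set (Fin 3 → ℝ)) := huniv ▸ hsupp
    exact (IsCompact.ne_univ hcpt) rfl
  intro x
  rw [hconst x x₀, image_eq_zero_of_notMem_tsupport hx₀]

/-- Triviality of the kernel of the Sym-Curl inequality on compactly supported smooth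
fields (Section 6.2). -/
theorem kernel_symCurl_trivial (T : (Fin 3 → ℝ) → Matrix (Fin 3) (Fin 3) ℝ)
    (hT : ContDiff ℝ (⊤ : ℕ∞) T) (hsupp : HasCompactSupport T)
    (hsym : ∀ x, symP (T x) = 0) (hcurl : ∀ x, curl3 T x = 0) :
    ∀ x, T x = 0 := by
  have hskew : ∀ x i j, T x j i = -(T x i j) := by
    intro x i j
    have h := congrFun (congrFun (hsym x) i) j
    simp [symP, Matrix.add_apply, Matrix.transpose_apply, Matrix.smul_apply,
      Matrix.zero_apply] at h
    linarith
  have hdiag : ∀ x i, T x i i = 0 := by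
    intro x i
    have h := hskew x i i
    linarith
  have e10 : (fun y => T y 1 0) = fun y => -(T y 0 1) := funext fun y => hskew y 0 1
  have e20 : (fun y => T y 2 0) = fun y => -(T y 0 2) := funext fun y => hskew y 0 2
  have e21 : (fun y => T y 2 1) = fun y => -(T y 1 2) := funext fun y => hskew y 1 2
  have e00 : (fun y => T y 0 0) = fun _ => (0:ℝ) := funext fun y => hdiag y 0
  have e11 : (fun y => T y 1 1) = fun _ => (0:ℝ) := funext fun y => hdiag y 1
  have e22 : (fun y => T y 2 2) = fun _ => (0:ℝ) := funext fun y => hdiag y 2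
  have hc' : ∀ x (i k : Fin 3), curl3 T x i k = 0 := by
    intro x i k
    rw [hcurl x]
    simp
  have key : ∀ x, (∀ j, pd j (fun y => T y 0 1) x = 0) ∧
      (∀ j, pd j (fun y => T y 0 2) x = 0) ∧ (∀ j, pd j (fun y => T y 1 2) x = 0) := by
    intro x
    have h00 := hc' x 0 0
    have h01 := hc' x 0 1
    have h02 := hc' x 0 2
    have h10 := hc' x 1 0
    have h11 := hc' x 1 1
    have h12 := hc' x 1 2
    have h20 := hc' x 2 0
    have h21 := hc' x 2 1
    have h22 := hc' x 2 2
    simp only [curl3, Matrix.of_apply, Matrix.cons_val_zero, Matrix.cons_val_one,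
      Matrix.head_cons, Matrix.cons_val_two, Matrix.tail_cons]
      at h00 h01 h02 h10 h11 h12 h20 h21 h22
    rw [e00] at h01 h02
    rw [e11] at h10 h12
    rw [e22] at h20 h21
    rw [e10] at h11 h12
    rw [e20] at h21 h22
    rw [e21] at h20 h22
    rw [pd_neg] at h11 h12 h20 h21 h22
    rw [pd_neg] at h22
    rw [pd_zero] at h01 h02 h10 h12 h20 h21
    have pa0 : pd 0 (fun y => T y 0 1) x = 0 := by linarith
    have pa1 : pd 1 (fun y => T y 0 1) x = 0 := by linarith
    have pa2 : pd 2 (fun y => T y 0 1) x = 0 := by linarith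
    have pb0 : pd 0 (fun y => T y 0 2) x = 0 := by linarith
    have pb1 : pd 1 (fun y => T y 0 2) x = 0 := by linarith
    have pb2 : pd 2 (fun y => T y 0 2) x = 0 := by linarith
    have pc0 : pd 0 (fun y => T y 1 2) x = 0 := by linarith
    have pc1 : pd 1 (fun y => T y 1 2) x = 0 := by linarith
    have pc2 : pd 2 (fun y => T y 1 2) x = 0 := by linarith
    refine ⟨fun j => ?_, fun j => ?_, fun j => ?_⟩ <;> fin_cases j <;>
      first
        | exact pa0 | exact pa1 | exact pa2
        | exact pb0 | exact pb1 | exact pb2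
        | exact pc0 | exact pc1 | exact pc2
  have hda : Differentiable ℝ (fun y => T y 0 1) :=
    (entry_contDiff T hT 0 1).differentiable (by simp)
  have hdb : Differentiable ℝ (fun y => T y 0 2) :=
    (entry_contDiff T hT 0 2).differentiable (by simp)
  have hdc : Differentiable ℝ (fun y => T y 1 2) :=
    (entry_contDiff T hT 1 2).differentiable (by simp)
  have hsa : HasCompactSupport (fun y => T y 0 1) :=
    hsupp.comp_left (g := fun X : Matrix (Fin 3) (Fin 3) ℝ => X 0 1) rfl
  have hsb : HasCompactSupport (fun y => T y 0 2) :=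
    hsupp.comp_left (g := fun X : Matrix (Fin 3) (Fin 3) ℝ => X 0 2) rfl
  have hsc : HasCompactSupport (fun y => T y 1 2) :=
    hsupp.comp_left (g := fun X : Matrix (Fin 3) (Fin 3) ℝ => X 1 2) rfl
  have haz : ∀ x, T x 0 1 = 0 :=
    zero_of_pd _ hda hsa (fun x j => (key x).1 j)
  have hbz : ∀ x, T x 0 2 = 0 :=
    zero_of_pd _ hdb hsb (fun x j => (key x).2.1 j)
  have hcz : ∀ x, T x 1 2 = 0 :=
    zero_of_pd _ hdc hsc (fun x j => (key x).2.2 j)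
  intro x
  ext i j
  fin_cases i <;> fin_cases j
  · exact hdiag x 0
  · exact haz x
  · exact hbz x
  · show T x 1 0 = 0
    rw [hskew x 0 1, haz x, neg_zero]
  · exact hdiag x 1
  · exact hcz x
  · show T x 2 0 = 0
    rw [hskew x 0 2, hbz x, neg_zero]
  · show T x 2 1 = 0
    rw [hskew x 1 2, hcz x, neg_zero]
  · exact hdiag x 2
end
end

section
/- Let n ≥ 3, let Ω ⊂ ℝⁿ be a nonempty connected open set, and let v : Ω → ℝⁿ be a smooth vector field with dev sym Grad v = 0 on Ω. Then there exist vectors w̄, v̄ ∈ ℝⁿ, a real number ū ∈ ℝ and a skew-symmetric matrix Ā ∈ ℝ^{n×n} such that for all x ∈ Ω: v(x) = (⟨w̄, x⟩ + ū)·x − (|x|²/2)·w̄ + Āx + v̄. (Representation formula for conformal Killing vectors, the Appendix, formula (4.3).) -/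
open MeasureTheory Real Matrix

attribute [local instance] Matrix.frobeniusNormedAddCommGroup Matrix.frobeniusNormedSpace

noncomputable section

variable {n : ℕ}


lemma pd_eq_of_hasFDerivAt {f : (Fin n → ℝ) → ℝ} {L : (Fin n → ℝ) →L[ℝ] ℝ}
    {x : Fin n → ℝ} (h : HasFDerivAt f L x) (j : Fin n) :
    pd j f x = L (Pi.single j 1) := by
  rw [pd, h.fderiv]

lemma pd_congr {Ω : Set (Fin n → ℝ)} (ho : IsOpen Ω) {f g : (Fin n → ℝ) → ℝ}
    (h : ∀ y ∈ Ω, f y = g y) {x : Fin n → ℝ} (hx : x ∈ Ω) (j : Fin n) :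
    pd j f x = pd j g x := by
  unfold pd
  rw [Filter.EventuallyEq.fderiv_eq (Filter.eventuallyEq_of_mem (ho.mem_nhds hx) h)]

lemma pd_contDiffAt {m : ℕ} {f : (Fin n → ℝ) → ℝ} {x : Fin n → ℝ}
    (hf : ContDiffAt ℝ (m + 1 : ℕ) f x) (j : Fin n) :
    ContDiffAt ℝ m (pd j f) x := by
  have h1 : ContDiffAt ℝ m (fderiv ℝ f) x := hf.fderiv_right (by norm_cast)
  have h2 : pd j f = fun y => fderiv ℝ f y (Pi.single j 1) := rfl
  rw [h2]
  exact h1.clm_apply contDiffAt_const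

lemma pd_comm {f : (Fin n → ℝ) → ℝ} {x : Fin n → ℝ}
    (hf : ContDiffAt ℝ 2 f x) (a b : Fin n) :
    pd a (pd b f) x = pd b (pd a f) x := by
  have hd : DifferentiableAt ℝ (fderiv ℝ f) x :=
    (hf.fderiv_right (m := 1) (by norm_num)).differentiableAt (by norm_num)
  have key : ∀ c e : Fin n,
      pd e (pd c f) x = fderiv ℝ (fderiv ℝ f) x (Pi.single e 1) (Pi.single c 1) := by
    intro c e
    have h2 : pd c f = fun y => fderiv ℝ f y (Pi.single c 1) := rfl
    rw [h2, pd, fderiv_clm_apply hd (differentiableAt_const _)]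
    simp
  rw [key, key]
  exact (hf.isSymmSndFDerivAt (by norm_num)) _ _

lemma fderiv_eq_zero_of_pd {f : (Fin n → ℝ) → ℝ} {x : Fin n → ℝ}
    (hdiff : DifferentiableAt ℝ f x) (hz : ∀ j, pd j f x = 0) :
    HasFDerivAt f (0 : (Fin n → ℝ) →L[ℝ] ℝ) x := by
  have h := hdiff.hasFDerivAt
  have hL : fderiv ℝ f x = 0 := by
    ext z
    simp only [ContinuousLinearMap.zero_apply]
    have hb : (∑ j, Pi.single j (z j) : Fin n → ℝ) = z := Finset.univ_sum_single z
    have h0 : ∀ j, fderiv ℝ f x (Pi.single j (z j)) = 0 := by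
      intro j
      have hs : (Pi.single j (z j) : Fin n → ℝ) = z j • (Pi.single j 1 : Fin n → ℝ) := by
        funext t
        by_cases ht : t = j <;> simp [Pi.single_apply, ht]
      rw [hs, _root_.map_smul, smul_eq_mul]
      have h3 := hz j
      rw [pd] at h3
      rw [h3, mul_zero]
    calc fderiv ℝ f x z = fderiv ℝ f x (∑ j, Pi.single j (z j)) := by rw [hb]
      _ = ∑ j, fderiv ℝ f x (Pi.single j (z j)) := map_sum _ _ _
      _ = 0 := by simp [h0]
  rwa [hL] at h


lemma const_on {n : ℕ} {Ω : Set (Fin n → ℝ)} (ho : IsOpen Ω) (hpc : IsPreconnected Ω)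
    {f : (Fin n → ℝ) → ℝ} (hd : ∀ x ∈ Ω, HasFDerivAt f (0 : (Fin n → ℝ) →L[ℝ] ℝ) x)
    {x y : Fin n → ℝ} (hx : x ∈ Ω) (hy : y ∈ Ω) : f x = f y := by
  haveI : PreconnectedSpace Ω := Subtype.preconnectedSpace hpc
  have hlc : IsLocallyConstant (fun z : Ω => f z.val) := by
    rw [IsLocallyConstant.iff_eventually_eq]
    intro z
    obtain ⟨ε, hε, hball⟩ := Metric.isOpen_iff.1 ho z.val z.2
    have hconst : ∀ w ∈ Metric.ball z.val ε, f w = f z.val := by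
      intro w hw
      refine Convex.is_const_of_fderivWithin_eq_zero (𝕜 := ℝ) (convex_ball _ _) ?_ ?_ hw
        (Metric.mem_ball_self hε)
      · intro p hp
        exact ((hd p (hball hp)).differentiableAt).differentiableWithinAt
      · intro p hp
        rw [fderivWithin_of_isOpen Metric.isOpen_ball hp]
        exact (hd p (hball hp)).fderiv
    have hmem : Metric.ball z.val ε ∈ nhds z.val := Metric.ball_mem_nhds _ hε
    have hpre := continuous_subtype_val.continuousAt.preimage_mem_nhds hmem
    filter_upwards [hpre] with w hw
    exact hconst w.val hw
  exact hlc.apply_eq_of_preconnectedSpace ⟨x, hx⟩ ⟨y, hy⟩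

namespace CKaux
open Matrix

variable {n : ℕ} {Ω : Set (Fin n → ℝ)} {v : (Fin n → ℝ) → (Fin n → ℝ)}

/-- velocity components -/
def aF (v : (Fin n → ℝ) → (Fin n → ℝ)) (i j : Fin n) : (Fin n → ℝ) → ℝ :=
  pd j (fun y => v y i)

def phiF (v : (Fin n → ℝ) → (Fin n → ℝ)) : (Fin n → ℝ) → ℝ :=
  fun y => (∑ i, aF v i i y) / n

def psiF (v : (Fin n → ℝ) → (Fin n → ℝ)) (m : Fin n) : (Fin n → ℝ) → ℝ :=
  pd m (phiF v)

def del (i j : Fin n) : ℝ := if i = j then 1 else 0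

lemma hP (ho : IsOpen Ω) (hv : ContDiffOn ℝ (⊤ : ℕ∞) v Ω) (k : ℕ) (i : Fin n)
    {x : Fin n → ℝ} (hx : x ∈ Ω) : ContDiffAt ℝ k (fun y => v y i) x := by
  have h1 : ContDiffAt ℝ (⊤ : ℕ∞) v x := (hv x hx).contDiffAt (ho.mem_nhds hx)
  exact contDiffAt_pi.1 (h1.of_le (by exact_mod_cast le_top)) i

lemma haF (ho : IsOpen Ω) (hv : ContDiffOn ℝ (⊤ : ℕ∞) v Ω) (k : ℕ) (i j : Fin n)
    {x : Fin n → ℝ} (hx : x ∈ Ω) : ContDiffAt ℝ k (aF v i j) x :=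
  pd_contDiffAt (hP ho hv (k + 1) i hx) j

lemma hphiF (ho : IsOpen Ω) (hv : ContDiffOn ℝ (⊤ : ℕ∞) v Ω) (k : ℕ)
    {x : Fin n → ℝ} (hx : x ∈ Ω) : ContDiffAt ℝ k (phiF v) x := by
  have : ContDiffAt ℝ k (fun y => ∑ i, aF v i i y) x :=
    ContDiffAt.sum fun i _ => haF ho hv k i i hx
  exact this.div_const _

lemma hpsiF (ho : IsOpen Ω) (hv : ContDiffOn ℝ (⊤ : ℕ∞) v Ω) (k : ℕ) (m : Fin n)
    {x : Fin n → ℝ} (hx : x ∈ Ω) : ContDiffAt ℝ k (psiF v m) x :=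
  pd_contDiffAt (hphiF ho hv (k + 1) hx) m

lemma hE (hn : 3 ≤ n) (hker : ∀ x ∈ Ω, dev (symP (gradM v x)) = 0)
    {x : Fin n → ℝ} (hx : x ∈ Ω) (i j : Fin n) :
    aF v i j x + aF v j i x = (if i = j then (2 : ℝ) else 0) * phiF v x := by
  have hnR : (n : ℝ) ≠ 0 := Nat.cast_ne_zero.2 (by omega)
  have h := hker x hx
  rw [dev, sub_eq_zero] at h
  have h1tr : Matrix.trace (gradM v x) = ∑ i, aF v i i x := by
    simp only [Matrix.trace, Matrix.diag, gradM, Matrix.of_apply]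
    rfl
  have htr : Matrix.trace (symP (gradM v x)) = ∑ i, aF v i i x := by
    simp only [symP, Matrix.trace_smul, Matrix.trace_add, Matrix.trace_transpose, h1tr,
      smul_eq_mul]
    ring
  have hij := congrFun (congrFun h i) j
  rw [htr] at hij
  simp only [symP, Matrix.smul_apply, Matrix.add_apply, Matrix.transpose_apply,
    Matrix.one_apply, gradM, Matrix.of_apply, smul_eq_mul, mul_ite, mul_one, mul_zero] at hij
  simp only [aF, phiF]
  by_cases hij' : i = j
  · subst hij'
    simp only [aF, if_true] at hij ⊢
    linarith
  · simp only [aF, if_neg hij'] at hij ⊢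
    rw [zero_mul]
    linarith

lemma pd_add {f g : (Fin n → ℝ) → ℝ} {x : Fin n → ℝ} (hf : DifferentiableAt ℝ f x)
    (hg : DifferentiableAt ℝ g x) (j : Fin n) :
    pd j (fun y => f y + g y) x = pd j f x + pd j g x := by
  unfold pd
  rw [fderiv_fun_add hf hg, ContinuousLinearMap.add_apply]

lemma pd_sub {f g : (Fin n → ℝ) → ℝ} {x : Fin n → ℝ} (hf : DifferentiableAt ℝ f x)
    (hg : DifferentiableAt ℝ g x) (j : Fin n) :
    pd j (fun y => f y - g y) x = pd j f x - pd j g x := by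
  unfold pd
  rw [fderiv_fun_sub hf hg, ContinuousLinearMap.sub_apply]

lemma pd_const_mul {f : (Fin n → ℝ) → ℝ} {x : Fin n → ℝ} (hf : DifferentiableAt ℝ f x)
    (c : ℝ) (j : Fin n) :
    pd j (fun y => c * f y) x = c * pd j f x := by
  unfold pd
  rw [fderiv_const_mul hf c]
  simp

lemma pd_comb3 {f g h : (Fin n → ℝ) → ℝ} {x : Fin n → ℝ} (hf : DifferentiableAt ℝ f x)
    (hg : DifferentiableAt ℝ g x) (hh : DifferentiableAt ℝ h x) (c1 c2 c3 : ℝ) (l : Fin n) :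
    pd l (fun y => c1 * f y + c2 * g y - c3 * h y) x
      = c1 * pd l f x + c2 * pd l g x - c3 * pd l h x := by
  rw [pd_sub ((hf.const_mul c1).fun_add (hg.const_mul c2)) (hh.const_mul c3),
    pd_add (hf.const_mul c1) (hg.const_mul c2), pd_const_mul hf, pd_const_mul hg,
    pd_const_mul hh]

lemma hS1 (ho : IsOpen Ω) (hv : ContDiffOn ℝ (⊤ : ℕ∞) v Ω) {x : Fin n → ℝ} (hx : x ∈ Ω)
    (i j k : Fin n) : pd k (aF v i j) x = pd j (aF v i k) x :=
  pd_comm (hP ho hv 2 i hx) k j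

lemma hS2 (hn : 3 ≤ n) (ho : IsOpen Ω) (hv : ContDiffOn ℝ (⊤ : ℕ∞) v Ω)
    (hker : ∀ x ∈ Ω, dev (symP (gradM v x)) = 0) {x : Fin n → ℝ} (hx : x ∈ Ω)
    (i j k : Fin n) :
    pd k (aF v i j) x + pd k (aF v j i) x = (if i = j then (2 : ℝ) else 0) * psiF v k x := by
  have h1 : pd k (fun y => aF v i j y + aF v j i y) x
      = pd k (fun y => (if i = j then (2 : ℝ) else 0) * phiF v y) x :=
    pd_congr ho (fun y hy => hE hn hker hy i j) hx k
  rw [pd_add ((haF ho hv 1 i j hx).differentiableAt (by norm_num))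
      ((haF ho hv 1 j i hx).differentiableAt (by norm_num)),
    pd_const_mul ((hphiF ho hv 1 hx).differentiableAt (by norm_num))] at h1
  exact h1

lemma two_del (p q : Fin n) : (if p = q then (2 : ℝ) else 0) = 2 * del p q := by
  by_cases h : p = q <;> simp [del, h]

lemma hT (hn : 3 ≤ n) (ho : IsOpen Ω) (hv : ContDiffOn ℝ (⊤ : ℕ∞) v Ω)
    (hker : ∀ x ∈ Ω, dev (symP (gradM v x)) = 0) {x : Fin n → ℝ} (hx : x ∈ Ω)
    (i j k : Fin n) :
    pd k (aF v i j) x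
      = del i j * psiF v k x + del i k * psiF v j x - del j k * psiF v i x := by
  have e1 := hS2 hn ho hv hker hx i j k
  have e2 := hS2 hn ho hv hker hx i k j
  have e3 := hS2 hn ho hv hker hx j k i
  rw [two_del] at e1 e2 e3
  have s1 := hS1 ho hv hx i j k
  have s2 := hS1 ho hv hx j i k
  have s3 := hS1 ho hv hx k i j
  linarith

lemma hStar (hn : 3 ≤ n) (ho : IsOpen Ω) (hv : ContDiffOn ℝ (⊤ : ℕ∞) v Ω)
    (hker : ∀ x ∈ Ω, dev (symP (gradM v x)) = 0) {x : Fin n → ℝ} (hx : x ∈ Ω)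
    (i j k l : Fin n) :
    del i j * pd l (psiF v k) x + del i k * pd l (psiF v j) x - del j k * pd l (psiF v i) x
      = del i j * pd k (psiF v l) x + del i l * pd k (psiF v j) x
          - del j l * pd k (psiF v i) x := by
  have hcomm : pd l (pd k (aF v i j)) x = pd k (pd l (aF v i j)) x :=
    pd_comm (haF ho hv 2 i j hx) l k
  have hpsid : ∀ m : Fin n, DifferentiableAt ℝ (psiF v m) x := fun m =>
    (hpsiF ho hv 1 m hx).differentiableAt (by norm_num)
  have c1 : pd l (pd k (aF v i j)) x
      = del i j * pd l (psiF v k) x + del i k * pd l (psiF v j) x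
          - del j k * pd l (psiF v i) x := by
    rw [pd_congr ho (fun y hy => hT hn ho hv hker hy i j k) hx l]
    exact pd_comb3 (hpsid k) (hpsid j) (hpsid i) _ _ _ l
  have c2 : pd k (pd l (aF v i j)) x
      = del i j * pd k (psiF v l) x + del i l * pd k (psiF v j) x
          - del j l * pd k (psiF v i) x := by
    rw [pd_congr ho (fun y hy => hT hn ho hv hker hy i j l) hx k]
    exact pd_comb3 (hpsid l) (hpsid j) (hpsid i) _ _ _ k
  rw [← c1, ← c2, hcomm]

lemma exists_third (hn : 3 ≤ n) (p q : Fin n) : ∃ c : Fin n, c ≠ p ∧ c ≠ q := by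
  by_contra hcon
  push_neg at hcon
  have hsub : (Finset.univ : Finset (Fin n)) ⊆ {p, q} := by
    intro c _
    by_cases hc : c = p
    · simp [hc]
    · simp [hcon c hc]
  have h1 := Finset.card_le_card hsub
  have h2 : ({p, q} : Finset (Fin n)).card ≤ 2 :=
    le_trans (Finset.card_insert_le _ _) (by simp)
  simp [Finset.card_univ] at h1
  omega

lemma hHzero (hn : 3 ≤ n) (ho : IsOpen Ω) (hv : ContDiffOn ℝ (⊤ : ℕ∞) v Ω)
    (hker : ∀ x ∈ Ω, dev (symP (gradM v x)) = 0) {x : Fin n → ℝ} (hx : x ∈ Ω)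
    (p q : Fin n) : pd p (psiF v q) x = 0 := by
  have hcommH : ∀ a b : Fin n, pd a (psiF v b) x = pd b (psiF v a) x := fun a b =>
    pd_comm (hphiF ho hv 2 hx) a b
  have hoff : ∀ a b : Fin n, a ≠ b → pd a (psiF v b) x = 0 := by
    intro a b hab
    obtain ⟨c, hca, hcb⟩ := exists_third hn a b
    have e := hStar hn ho hv hker hx c b c a
    simp only [del, if_pos rfl, if_true, if_neg hcb, if_neg hca, if_neg (Ne.symm hcb),
      if_neg (Ne.symm hab), one_mul, zero_mul, mul_zero] at e
    linarith
  have hdiag : ∀ a b : Fin n, a ≠ b → pd b (psiF v b) x = - pd a (psiF v a) x := by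
    intro a b hab
    have e := hStar hn ho hv hker hx a b a b
    simp only [del, if_pos rfl, if_true, if_neg hab, if_neg (Ne.symm hab), one_mul, zero_mul,
      mul_zero] at e
    linarith
  by_cases hpq : p = q
  · subst hpq
    obtain ⟨q, hq, _⟩ := exists_third hn p p
    obtain ⟨c, hcp, hcq⟩ := exists_third hn p q
    have e1 := hdiag p q (Ne.symm hq)
    have e2 := hdiag q c (Ne.symm hcq)
    have e3 := hdiag c p hcp
    linarith
  · exact hoff p q hpq

def projL (m : Fin n) : (Fin n → ℝ) →L[ℝ] ℝ := ContinuousLinearMap.proj m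

lemma hasFD_lin (c : Fin n → ℝ) (x : Fin n → ℝ) :
    HasFDerivAt (fun y : Fin n → ℝ => ∑ m, c m * y m) (∑ m, c m • projL m) x := by
  apply HasFDerivAt.fun_sum
  intro m _
  exact ((ContinuousLinearMap.proj m : (Fin n → ℝ) →L[ℝ] ℝ).hasFDerivAt).const_mul (c m)

lemma lin_eval (c : Fin n → ℝ) (j : Fin n) :
    (∑ m, c m • projL m) (Pi.single j (1 : ℝ)) = c j := by
  simp [projL, ContinuousLinearMap.sum_apply, ContinuousLinearMap.proj_apply,
    Pi.single_apply]

lemma pd_lin (c : Fin n → ℝ) (x : Fin n → ℝ) (j : Fin n) :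
    pd j (fun y => ∑ m, c m * y m) x = c j := by
  rw [pd_eq_of_hasFDerivAt (hasFD_lin c x), lin_eval]

lemma diff_proj (i : Fin n) (x : Fin n → ℝ) :
    DifferentiableAt ℝ (fun y : Fin n → ℝ => y i) x :=
  (ContinuousLinearMap.proj i : (Fin n → ℝ) →L[ℝ] ℝ).differentiableAt

lemma pd_proj (i : Fin n) (x : Fin n → ℝ) (j : Fin n) :
    pd j (fun y => y i) x = del i j := by
  have h : HasFDerivAt (fun y : Fin n → ℝ => y i)
      (ContinuousLinearMap.proj i : (Fin n → ℝ) →L[ℝ] ℝ) x :=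
    (ContinuousLinearMap.proj i : (Fin n → ℝ) →L[ℝ] ℝ).hasFDerivAt
  rw [pd_eq_of_hasFDerivAt h]
  simp [ContinuousLinearMap.proj_apply, Pi.single_apply, del]

def wF (v : (Fin n → ℝ) → (Fin n → ℝ)) (x₀ : Fin n → ℝ) : Fin n → ℝ :=
  fun m => psiF v m x₀

def uF (v : (Fin n → ℝ) → (Fin n → ℝ)) (x₀ : Fin n → ℝ) : ℝ :=
  phiF v x₀ - ∑ m, wF v x₀ m * x₀ m

def AF (v : (Fin n → ℝ) → (Fin n → ℝ)) (x₀ : Fin n → ℝ) : Matrix (Fin n) (Fin n) ℝ :=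
  Matrix.of fun i j =>
    aF v i j x₀ - (wF v x₀ j * x₀ i + del i j * phiF v x₀ - wF v x₀ i * x₀ j)

variable (hn : 3 ≤ n) (ho : IsOpen Ω) (hpc : IsPreconnected Ω)
  (hv : ContDiffOn ℝ (⊤ : ℕ∞) v Ω) (hker : ∀ x ∈ Ω, dev (symP (gradM v x)) = 0)

include hn ho hpc hv hker

lemma psi_const {x x₀ : Fin n → ℝ} (hx : x ∈ Ω) (hx₀ : x₀ ∈ Ω) (m : Fin n) :
    psiF v m x = wF v x₀ m :=
  const_on ho hpc
    (fun p hp => fderiv_eq_zero_of_pd ((hpsiF ho hv 1 m hp).differentiableAt (by norm_num))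
      (fun j => hHzero hn ho hv hker hp j m)) hx hx₀

lemma phi_eq {x x₀ : Fin n → ℝ} (hx : x ∈ Ω) (hx₀ : x₀ ∈ Ω) :
    phiF v x = (∑ m, wF v x₀ m * x m) + uF v x₀ := by
  have hg : ∀ p ∈ Ω, HasFDerivAt (fun y => phiF v y - ∑ m, wF v x₀ m * y m)
      (0 : (Fin n → ℝ) →L[ℝ] ℝ) p := by
    intro p hp
    apply fderiv_eq_zero_of_pd
    · exact ((hphiF ho hv 1 hp).differentiableAt (by norm_num)).sub
        (hasFD_lin (wF v x₀) p).differentiableAt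
    · intro j
      rw [pd_sub ((hphiF ho hv 1 hp).differentiableAt (by norm_num))
        (hasFD_lin (wF v x₀) p).differentiableAt j, pd_lin]
      have h1 : pd j (phiF v) p = wF v x₀ j := psi_const hn ho hpc hv hker hp hx₀ j
      rw [h1, sub_self]
  have h2 := const_on ho hpc hg hx hx₀
  rw [uF]
  linarith
omit hn ho hpc hv hker in
lemma skewA_aux (hn : 3 ≤ n) (hker : ∀ x ∈ Ω, dev (symP (gradM v x)) = 0)
    {x₀ : Fin n → ℝ} (hx₀ : x₀ ∈ Ω) : (AF v x₀)ᵀ = - AF v x₀ := by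
  ext i j
  have e := hE hn hker hx₀ j i
  rw [two_del] at e
  have hd : del j i = del i j := by simp [del, eq_comm]
  rw [hd] at e
  simp only [Matrix.transpose_apply, Matrix.neg_apply, AF, Matrix.of_apply, hd]
  linarith

lemma hB {x x₀ : Fin n → ℝ} (hx : x ∈ Ω) (hx₀ : x₀ ∈ Ω) (i j : Fin n) :
    aF v i j x = wF v x₀ j * x i + del i j * phiF v x - wF v x₀ i * x j
      + AF v x₀ i j := by
  have hg : ∀ p ∈ Ω, HasFDerivAt
      (fun y => aF v i j y - (wF v x₀ j * y i + del i j * phiF v y - wF v x₀ i * y j))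
      (0 : (Fin n → ℝ) →L[ℝ] ℝ) p := by
    intro p hp
    have hphid : DifferentiableAt ℝ (phiF v) p := (hphiF ho hv 1 hp).differentiableAt (by norm_num)
    have hinner : DifferentiableAt ℝ
        (fun y => wF v x₀ j * y i + del i j * phiF v y - wF v x₀ i * y j) p :=
      (((diff_proj i p).const_mul _).add (hphid.const_mul _)).sub
        ((diff_proj j p).const_mul _)
    apply fderiv_eq_zero_of_pd
    · exact ((haF ho hv 1 i j hp).differentiableAt (by norm_num)).sub hinner
    · intro k
      rw [pd_sub ((haF ho hv 1 i j hp).differentiableAt (by norm_num)) hinner k,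
        pd_comb3 (diff_proj i p) hphid (diff_proj j p) _ _ _ k,
        hT hn ho hv hker hp i j k, pd_proj, pd_proj]
      have hψ : ∀ m : Fin n, psiF v m p = wF v x₀ m := fun m =>
        psi_const hn ho hpc hv hker hp hx₀ m
      have hψφ : pd k (phiF v) p = wF v x₀ k := psi_const hn ho hpc hv hker hp hx₀ k
      rw [hψφ, hψ i, hψ j, hψ k]
      ring
  have h2 := const_on ho hpc hg hx hx₀
  have h3 : AF v x₀ i j
      = aF v i j x₀ - (wF v x₀ j * x₀ i + del i j * phiF v x₀ - wF v x₀ i * x₀ j) := rfl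
  linarith

def QF (v : (Fin n → ℝ) → (Fin n → ℝ)) (x₀ : Fin n → ℝ) (i : Fin n) :
    (Fin n → ℝ) → ℝ :=
  fun y => ((∑ m, wF v x₀ m * y m) + uF v x₀) * y i
    - (wF v x₀ i / 2) * ∑ m, y m * y m + ∑ m, AF v x₀ i m * y m

omit hn ho hpc hv hker in
lemma hasFD_QF (v : (Fin n → ℝ) → (Fin n → ℝ)) (x₀ : Fin n → ℝ) (i : Fin n)
    (p : Fin n → ℝ) : HasFDerivAt (QF v x₀ i)
    ((((∑ m, wF v x₀ m * p m) + uF v x₀) • projL i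
        + p i • (∑ m, wF v x₀ m • projL m))
      - (wF v x₀ i / 2) • (∑ m, (p m • projL m + p m • projL m))
      + ∑ m, AF v x₀ i m • projL m) p := by
  have h1 : HasFDerivAt (fun y : Fin n → ℝ => (∑ m, wF v x₀ m * y m) + uF v x₀)
      (∑ m, wF v x₀ m • projL m) p := (hasFD_lin _ p).add_const _
  have hpi : HasFDerivAt (fun y : Fin n → ℝ => y i) (projL i) p :=
    (ContinuousLinearMap.proj i : (Fin n → ℝ) →L[ℝ] ℝ).hasFDerivAt
  have h2 := h1.mul hpi
  have h3 : HasFDerivAt (fun y : Fin n → ℝ => ∑ m, y m * y m)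
      (∑ m, (p m • projL m + p m • projL m)) p := by
    apply HasFDerivAt.fun_sum
    intro m _
    have hm : HasFDerivAt (fun y : Fin n → ℝ => y m) (projL m) p :=
      (ContinuousLinearMap.proj m : (Fin n → ℝ) →L[ℝ] ℝ).hasFDerivAt
    exact hm.mul hm
  have h4 := h3.const_mul (wF v x₀ i / 2)
  have h5 := hasFD_lin (fun m => AF v x₀ i m) p
  exact (h2.sub h4).add h5

omit hn ho hpc hv hker in
lemma pd_QF (v : (Fin n → ℝ) → (Fin n → ℝ)) (x₀ : Fin n → ℝ) (i : Fin n)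
    (p : Fin n → ℝ) (j : Fin n) :
    pd j (QF v x₀ i) p = ((∑ m, wF v x₀ m * p m) + uF v x₀) * del i j
      + p i * wF v x₀ j - wF v x₀ i * p j + AF v x₀ i j := by
  rw [pd_eq_of_hasFDerivAt (hasFD_QF v x₀ i p)]
  simp only [ContinuousLinearMap.add_apply, ContinuousLinearMap.sub_apply,
    ContinuousLinearMap.smul_apply, ContinuousLinearMap.sum_apply, projL,
    ContinuousLinearMap.proj_apply, Pi.single_apply, smul_eq_mul, del,
    mul_ite, mul_one, mul_zero, Finset.sum_ite_eq', Finset.mem_univ, if_true]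
  have hs : (∑ x, ((if x = j then p x else 0) + if x = j then p x else 0)) = p j + p j := by
    rw [Finset.sum_add_distrib]
    simp
  rw [hs]
  ring

lemma final_rep {x x₀ : Fin n → ℝ} (hx : x ∈ Ω) (hx₀ : x₀ ∈ Ω) (i : Fin n) :
    v x i - QF v x₀ i x = v x₀ i - QF v x₀ i x₀ := by
  have hg : ∀ p ∈ Ω, HasFDerivAt (fun y => v y i - QF v x₀ i y)
      (0 : (Fin n → ℝ) →L[ℝ] ℝ) p := by
    intro p hp
    apply fderiv_eq_zero_of_pd
    · exact ((hP ho hv 1 i hp).differentiableAt (by norm_num)).sub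
        (hasFD_QF v x₀ i p).differentiableAt
    · intro j
      rw [pd_sub ((hP ho hv 1 i hp).differentiableAt (by norm_num))
        (hasFD_QF v x₀ i p).differentiableAt j, pd_QF]
      have hBp : pd j (fun y => v y i) p
          = wF v x₀ j * p i + del i j * phiF v p - wF v x₀ i * p j + AF v x₀ i j :=
        hB hn ho hpc hv hker hp hx₀ i j
      rw [hBp, phi_eq hn ho hpc hv hker hp hx₀]
      ring
  exact const_on ho hpc hg hx hx₀

end CKaux

/-- Representation formula for conformal Killing vectors (Appendix, formula (4.3)). -/
theorem conformal_killing_representation (n : ℕ) (hn : 3 ≤ n)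
    (Ω : Set (Fin n → ℝ)) (hne : Ω.Nonempty) (ho : IsOpen Ω) (hconn : IsConnected Ω)
    (v : (Fin n → ℝ) → (Fin n → ℝ)) (hv : ContDiffOn ℝ (⊤ : ℕ∞) v Ω)
    (hker : ∀ x ∈ Ω, dev (symP (gradM v x)) = 0) :
    ∃ (w : Fin n → ℝ) (vbar : Fin n → ℝ) (u : ℝ) (A : Matrix (Fin n) (Fin n) ℝ),
      Aᵀ = -A ∧
      ∀ x ∈ Ω,
        v x = ((∑ i, w i * x i) + u) • x - ((∑ i, (x i) ^ 2) / 2) • w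
                + A.mulVec x + vbar := by
  obtain ⟨x₀, hx₀⟩ := hne
  have hpc : IsPreconnected Ω := hconn.isPreconnected
  refine ⟨CKaux.wF v x₀, fun i => v x₀ i - CKaux.QF v x₀ i x₀, CKaux.uF v x₀,
    CKaux.AF v x₀, CKaux.skewA_aux hn hker hx₀, ?_⟩
  intro x hx
  funext i
  have h := CKaux.final_rep hn ho hpc hv hker hx hx₀ i
  simp only [CKaux.QF] at h
  simp only [Pi.add_apply, Pi.sub_apply, Pi.smul_apply, smul_eq_mul,
    Matrix.mulVec, dotProduct, CKaux.QF]
  have hsq : (∑ m, (x m : ℝ) ^ 2) = ∑ m, x m * x m :=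
    Finset.sum_congr rfl fun m _ => by ring
  rw [hsq]
  linear_combination h
end
end

section
/- Identify ℝ² with ℂ via z = x + iy and let Ω = { z ∈ ℂ : |z| < 1, Re z > 0 } be the open right half-disk. For n ∈ ℕ define u_n : ℝ² → ℝ² by u_n(z) = (Re z)·zⁿ (complex multiplication, viewed as a map ℝ² → ℝ²). Then ∫_Ω |Grad u_n|² dx dy = π (n² + n + 1)/(2n + 2) and ∫_Ω |dev₂ sym Grad u_n|² dx dy = π/(4n + 4); in particular |dev₂ sym Grad u_n(z)|² = |z|^{2n}/2 pointwise. (Computations of Section 6.6.) -/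
/-!
Write `∂_z̄ = (∂_x + i ∂_y) / 2`. For any `u : ℂ → ℂ` one has `|dev₂ sym Grad u|² = 2 |∂_z̄ u|²`,
and since `zⁿ` is holomorphic and `∂_z̄ (Re z) = 1/2`, `∂_z̄ u_n = zⁿ / 2`, which gives the
pointwise identity. For the Dirichlet energy, `|Grad u_n|² = |∂_x u_n|² + |∂_y u_n|²`; multiplying
by `|z|²` clears the factor `z^(n-1)` and gives `(((n+1)² + n²) x² + y²) |z|^(2n)`. In polar
coordinates the half-disk is `(0,1) × (-π/2, π/2)` and both integrands split as `r^(2n+1)` times a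
trigonometric polynomial in `θ`.
-/

open MeasureTheory Real Matrix Filter Complex

noncomputable section

/-- The Jacobian of a map ℝ² → ℝ², where ℝ² is identified with ℂ via z = x + iy:
(Grad u)ᵢⱼ = ∂ⱼuᵢ. -/
def jacC (u : ℂ → ℂ) (z : ℂ) : Matrix (Fin 2) (Fin 2) ℝ :=
  !![(fderiv ℝ u z 1).re, (fderiv ℝ u z Complex.I).re;
     (fderiv ℝ u z 1).im, (fderiv ℝ u z Complex.I).im]

/-- The sequence u_n(z) = (Re z)·zⁿ, viewed as maps ℝ² → ℝ². -/
def un (n : ℕ) (z : ℂ) : ℂ := (z.re : ℂ) * z ^ n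

/-- The open right half-disk Ω = { z : |z| < 1, Re z > 0 }. -/
def halfDisk : Set ℂ := {z : ℂ | ‖z‖ < 1 ∧ 0 < z.re}

theorem frobSq_dev_symP_fin_two (X : Matrix (Fin 2) (Fin 2) ℝ) :
    frobSq (dev (symP X)) = ((X 0 0 - X 1 1) ^ 2 + (X 0 1 + X 1 0) ^ 2) / 2 := by
  simp only [frobSq, dev, symP, trace_fin_two, Fin.sum_univ_two, Matrix.sub_apply,
    Matrix.add_apply, Matrix.smul_apply, transpose_apply, one_apply_eq, one_apply_ne, ne_eq,
    zero_ne_one, one_ne_zero, not_false_eq_true, smul_eq_mul]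
  ring

theorem frobSq_jacC (u : ℂ → ℂ) (z : ℂ) :
    frobSq (jacC u z) = ‖fderiv ℝ u z 1‖ ^ 2 + ‖fderiv ℝ u z I‖ ^ 2 := by
  simp only [frobSq, jacC, Fin.sum_univ_two, of_apply, cons_val', cons_val_zero, cons_val_one,
    cons_val_fin_one, Complex.sq_norm, normSq_apply]
  ring

theorem frobSq_dev_symP_jacC (u : ℂ → ℂ) (z : ℂ) :
    frobSq (dev (symP (jacC u z))) = ‖fderiv ℝ u z 1 + I * fderiv ℝ u z I‖ ^ 2 / 2 := by
  rw [frobSq_dev_symP_fin_two, Complex.sq_norm, normSq_apply]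
  simp only [jacC, of_apply, cons_val', cons_val_zero, cons_val_one, cons_val_fin_one,
    add_re, add_im, mul_re, mul_im, I_re, I_im]
  ring

theorem fderiv_un_apply (n : ℕ) (z w : ℂ) :
    fderiv ℝ (un n) z w = (w.re : ℂ) * z ^ n + (z.re : ℂ) * (n * z ^ (n - 1)) * w := by
  have hre : HasFDerivAt (fun z : ℂ => (z.re : ℂ)) (ofRealCLM.comp reCLM) z :=
    (ofRealCLM.comp reCLM).hasFDerivAt
  have hpow := (hasDerivAt_pow n z).hasFDerivAt.restrictScalars ℝ
  rw [show un n = (fun z : ℂ => (z.re : ℂ)) * fun z => z ^ n from rfl, (hre.mul hpow).fderiv]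
  simp only [_root_.add_apply, _root_.smul_apply,
    ContinuousLinearMap.coe_restrictScalars', ContinuousLinearMap.toSpanSingleton_apply,
    ContinuousLinearMap.comp_apply, reCLM_apply, ofRealCLM_apply, smul_eq_mul]
  ring

-- At `n = 0` the truncated exponent `n - 1 = 0` is harmless because the factor `n` vanishes.
theorem natCast_mul_pow_pred_mul_self (n : ℕ) (z : ℂ) : n * z ^ (n - 1) * z = n * z ^ n := by
  cases n with
  | zero => simp
  | succ m => simp [pow_succ, mul_assoc]

theorem fderiv_un_one_add_I_mul_fderiv_un_I (n : ℕ) (z : ℂ) :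
    fderiv ℝ (un n) z 1 + I * fderiv ℝ (un n) z I = z ^ n := by
  simp only [fderiv_un_apply, one_re, I_re, ofReal_one, ofReal_zero]
  linear_combination (z.re * (n * z ^ (n - 1)) : ℂ) * I_sq

theorem frobSq_dev_symP_jacC_un (n : ℕ) (z : ℂ) :
    frobSq (dev (symP (jacC (un n) z))) = ‖z‖ ^ (2 * n) / 2 := by
  rw [frobSq_dev_symP_jacC, fderiv_un_one_add_I_mul_fderiv_un_I, norm_pow, ← pow_mul, mul_comm]

theorem sq_norm_mul_frobSq_jacC_un (n : ℕ) (z : ℂ) :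
    ‖z‖ ^ 2 * frobSq (jacC (un n) z) =
      ((((n : ℝ) + 1) ^ 2 + (n : ℝ) ^ 2) * z.re ^ 2 + z.im ^ 2) * ‖z‖ ^ (2 * n) := by
  have hx : z * fderiv ℝ (un n) z 1 = z ^ n * (z + n * z.re) := by
    rw [fderiv_un_apply, one_re, ofReal_one]
    linear_combination (z.re : ℂ) * natCast_mul_pow_pred_mul_self n z
  have hy : z * fderiv ℝ (un n) z I = z ^ n * (I * n * z.re) := by
    rw [fderiv_un_apply, I_re, ofReal_zero]
    linear_combination (I * z.re : ℂ) * natCast_mul_pow_pred_mul_self n z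
  calc ‖z‖ ^ 2 * frobSq (jacC (un n) z)
      = ‖z * fderiv ℝ (un n) z 1‖ ^ 2 + ‖z * fderiv ℝ (un n) z I‖ ^ 2 := by
        rw [frobSq_jacC, norm_mul, norm_mul]; ring
    _ = (‖z + n * z.re‖ ^ 2 + ‖I * n * z.re‖ ^ 2) * ‖z‖ ^ (2 * n) := by
        rw [hx, hy, norm_mul, norm_mul, norm_pow, pow_mul']; ring
    _ = ((((n : ℝ) + 1) ^ 2 + (n : ℝ) ^ 2) * z.re ^ 2 + z.im ^ 2) * ‖z‖ ^ (2 * n) := by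
        simp only [Complex.sq_norm, normSq_apply, add_re, add_im, mul_re, mul_im, ofReal_re,
          ofReal_im, natCast_re, natCast_im, I_re, I_im]
        ring

theorem re_polarCoord_symm (p : ℝ × ℝ) : (Complex.polarCoord.symm p).re = p.1 * Real.cos p.2 := by
  simp [Complex.cos_ofReal_re]

theorem im_polarCoord_symm (p : ℝ × ℝ) : (Complex.polarCoord.symm p).im = p.1 * Real.sin p.2 := by
  simp [Complex.sin_ofReal_re]

theorem mul_frobSq_jacC_un_polarCoord_symm (n : ℕ) {r : ℝ} (hr : 0 < r) (θ : ℝ) :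
    r * frobSq (jacC (un n) (Complex.polarCoord.symm (r, θ))) =
      r ^ (2 * n + 1) * ((((n : ℝ) + 1) ^ 2 + (n : ℝ) ^ 2) * Real.cos θ ^ 2 + Real.sin θ ^ 2) := by
  have h := sq_norm_mul_frobSq_jacC_un n (Complex.polarCoord.symm (r, θ))
  rw [Complex.norm_polarCoord_symm, abs_of_pos hr, re_polarCoord_symm, im_polarCoord_symm] at h
  refine mul_left_cancel₀ hr.ne' ?_
  linear_combination h

theorem polarCoord_target_inter_preimage_halfDisk :
    Complex.polarCoord.target ∩ Complex.polarCoord.symm ⁻¹' halfDisk =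
      Set.Ioo 0 1 ×ˢ Set.Ioo (-(π / 2)) (π / 2) := by
  ext ⟨r, θ⟩
  constructor
  · rintro ⟨hp, hmem⟩
    have hinv := Complex.polarCoord.right_inv hp
    rw [Complex.polarCoord_apply, Prod.mk.injEq] at hinv
    obtain ⟨hnorm, harg⟩ := hinv
    obtain ⟨hr1, hre⟩ := hmem
    rw [hnorm] at hr1
    have habs := Complex.abs_arg_lt_pi_div_two_iff.2 (Or.inl hre)
    rw [harg, abs_lt] at habs
    exact ⟨⟨hp.1, hr1⟩, habs⟩
  · rintro ⟨⟨hr0, hr1⟩, hθ⟩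
    have hp : (r, θ) ∈ Complex.polarCoord.target := by
      rw [Complex.polarCoord_target]
      exact ⟨hr0, by constructor <;> linarith [hθ.1, hθ.2, pi_pos]⟩
    refine ⟨hp, ?_, ?_⟩
    · simpa [abs_of_pos hr0] using hr1
    · simpa only [Set.mem_preimage, re_polarCoord_symm] using mul_pos hr0 (cos_pos_of_mem_Ioo hθ)

theorem setIntegral_halfDisk_eq_polar {E : Type*} [NormedAddCommGroup E] [NormedSpace ℝ E]
    (f : ℂ → E) :
    ∫ z in halfDisk, f z =
      ∫ p in Set.Ioo 0 1 ×ˢ Set.Ioo (-(π / 2)) (π / 2), p.1 • f (Complex.polarCoord.symm p) := by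
  have hmeas : MeasurableSet halfDisk :=
    (measurableSet_lt continuous_norm.measurable measurable_const).inter
      (measurableSet_lt measurable_const Complex.measurable_re)
  rw [← integral_indicator hmeas, ← Complex.integral_comp_polarCoord_symm,
    ← polarCoord_target_inter_preimage_halfDisk, ← setIntegral_indicator]
  · refine setIntegral_congr_fun Complex.polarCoord.open_target.measurableSet fun p _ => ?_
    by_cases h : Complex.polarCoord.symm p ∈ halfDisk
    · rw [Set.indicator_of_mem h, Set.indicator_of_mem (Set.mem_preimage.2 h)]
    · rw [Set.indicator_of_notMem h, Set.indicator_of_notMem (mt Set.mem_preimage.1 h), smul_zero]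
  · have : Measurable Complex.polarCoord.symm := by
      rw [funext Complex.polarCoord_symm_apply]; fun_prop
    exact this hmeas

theorem setIntegral_halfDisk_eq_mul (f : ℂ → ℝ) (g h : ℝ → ℝ)
    (hf : ∀ r θ, 0 < r → r * f (Complex.polarCoord.symm (r, θ)) = g r * h θ) :
    ∫ z in halfDisk, f z = (∫ r in Set.Ioo 0 1, g r) * ∫ θ in Set.Ioo (-(π / 2)) (π / 2), h θ := by
  rw [setIntegral_halfDisk_eq_polar, ← setIntegral_prod_mul]
  exact setIntegral_congr_fun (measurableSet_Ioo.prod measurableSet_Ioo)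
    fun p hp => hf p.1 p.2 hp.1.1

theorem integral_Ioo_zero_one_pow (k : ℕ) : ∫ r in Set.Ioo (0 : ℝ) 1, r ^ k = 1 / (k + 1) := by
  rw [← integral_Ioc_eq_integral_Ioo, ← intervalIntegral.integral_of_le zero_le_one, integral_pow]
  simp

theorem integral_Ioo_neg_pi_div_two_const (c : ℝ) :
    ∫ _ in Set.Ioo (-(π / 2)) (π / 2), c = c * π := by
  rw [setIntegral_const, Real.volume_real_Ioo_of_le (by linarith [pi_pos]), smul_eq_mul]
  ring

theorem integral_Ioo_neg_pi_div_two_mul_cos_sq_add_sin_sq (c : ℝ) :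
    ∫ θ in Set.Ioo (-(π / 2)) (π / 2), (c * Real.cos θ ^ 2 + Real.sin θ ^ 2) =
      (c + 1) * (π / 2) := by
  rw [← integral_Ioc_eq_integral_Ioo,
    ← intervalIntegral.integral_of_le (by linarith [pi_pos] : -(π / 2) ≤ π / 2),
    intervalIntegral.integral_add (Continuous.intervalIntegrable (by fun_prop) _ _)
      (Continuous.intervalIntegrable (by fun_prop) _ _),
    intervalIntegral.integral_const_mul, integral_cos_sq, integral_sin_sq]
  simp only [Real.cos_pi_div_two, Real.sin_pi_div_two, Real.cos_neg, Real.sin_neg]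
  ring

/-- Computations of Section 6.6: the Dirichlet energy of u_n over the right half-disk,
the L² norm of the two-dimensional trace-free symmetric gradient, and its pointwise
value. -/
theorem halfDisk_un_computations (n : ℕ) :
    (∫ z in halfDisk, frobSq (jacC (un n) z)) =
        π * ((n : ℝ) ^ 2 + n + 1) / (2 * n + 2) ∧
    (∫ z in halfDisk, frobSq (dev (symP (jacC (un n) z)))) = π / (4 * n + 4) ∧
    ∀ z : ℂ, frobSq (dev (symP (jacC (un n) z))) = (‖z‖) ^ (2 * n) / 2 := by
  refine ⟨?_, ?_, frobSq_dev_symP_jacC_un n⟩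
  · rw [setIntegral_halfDisk_eq_mul _ _ _ fun r θ hr => mul_frobSq_jacC_un_polarCoord_symm n hr θ,
      integral_Ioo_zero_one_pow, integral_Ioo_neg_pi_div_two_mul_cos_sq_add_sin_sq]
    push_cast
    field_simp
    ring
  · have hpolar (r θ : ℝ) (hr : 0 < r) :
        r * (‖Complex.polarCoord.symm (r, θ)‖ ^ (2 * n) / 2) = r ^ (2 * n + 1) * (1 / 2) := by
      rw [Complex.norm_polarCoord_symm, abs_of_pos hr]; ring
    simp_rw [frobSq_dev_symP_jacC_un]
    rw [setIntegral_halfDisk_eq_mul _ _ _ hpolar, integral_Ioo_zero_one_pow,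
      integral_Ioo_neg_pi_div_two_const]
    push_cast
    field_simp
    ring
end
end

section
/- Identify ℝ² with ℂ via z = x + iy and let Ω = { z ∈ ℂ : |z| < 1, Re z > 0 } be the open right half-disk, with Γ_τ = { z ∈ ∂Ω : Re z = 0 }. Then there is NO constant C > 0 such that ∫_Ω |Grad v|² dx dy ≤ C ∫_Ω |dev₂ sym Grad v|² dx dy holds for all smooth maps v : ℝ² → ℝ² vanishing on the imaginary axis { z : Re z = 0 } (hence on Γ_τ). Witnesses are the maps u_n(z) = (Re z)·zⁿ, for which the left-hand side tends to infinity while the right-hand side tends to zero as n → ∞. (Section 6.6: the trace-free Korn inequality with only a partial boundary condition is false for n = 2.) -/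
open MeasureTheory Real Matrix Filter Complex

noncomputable section

/-! ### Auxiliary computations -/

lemma fderiv_un (n : ℕ) (z : ℂ) :
    fderiv ℝ (un n) z = (z.re : ℂ) •
        (((ContinuousLinearMap.smulRight (1 : ℂ →L[ℂ] ℂ) ((n:ℂ) * z ^ (n-1))).restrictScalars ℝ))
      + (z ^ n) • (Complex.ofRealCLM.comp Complex.reCLM) := by
  have h1 : HasFDerivAt (fun w : ℂ => (w.re : ℂ)) (Complex.ofRealCLM.comp Complex.reCLM) z :=
    (Complex.ofRealCLM.comp Complex.reCLM).hasFDerivAt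
  have h2 : HasFDerivAt (fun w : ℂ => w ^ n)
      (((ContinuousLinearMap.smulRight (1 : ℂ →L[ℂ] ℂ) ((n:ℂ) * z ^ (n-1))).restrictScalars ℝ)) z :=
    ((hasDerivAt_pow n z).hasFDerivAt).restrictScalars ℝ
  exact (h1.mul h2).fderiv

lemma jacC_un (n : ℕ) (z : ℂ) :
    jacC (un n) z =
      !![(z^n).re + n*z.re*(z^(n-1)).re, -(n*z.re*(z^(n-1)).im);
         (z^n).im + n*z.re*(z^(n-1)).im, n*z.re*(z^(n-1)).re] := by
  rw [jacC, fderiv_un]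
  simp [Complex.add_re, Complex.add_im, Complex.mul_re, Complex.mul_im, smul_eq_mul]
  refine ⟨⟨?_, ?_⟩, ?_, ?_⟩ <;> ring

lemma frobSq_fin_two (a b c d : ℝ) : frobSq !![a,b;c,d] = a^2+b^2+c^2+d^2 := by
  simp [frobSq, Fin.sum_univ_two]; ring

lemma frobSq_dev_symP (a b c d : ℝ) :
    frobSq (dev (symP !![a,b;c,d])) = ((a-d)^2 + (b+c)^2)/2 := by
  have ht : (!![a,b;c,d])ᵀ = !![a,c;b,d] := by ext i j; fin_cases i <;> fin_cases j <;> rfl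
  simp [frobSq, dev, symP, ht, Matrix.trace_fin_two_of, Fin.sum_univ_two, Matrix.one_fin_two]
  ring

lemma devSym_formula (n : ℕ) (z : ℂ) :
    frobSq (dev (symP (jacC (un n) z))) = (Complex.normSq z)^n / 2 := by
  rw [jacC_un, frobSq_dev_symP, ← map_pow Complex.normSq z]
  simp [Complex.normSq_apply]
  ring

lemma grad_formula (n : ℕ) (z : ℂ) :
    frobSq (jacC (un n) z) =
      ((z^n).re + n*z.re*(z^(n-1)).re)^2 + (-(n*z.re*(z^(n-1)).im))^2
        + ((z^n).im + n*z.re*(z^(n-1)).im)^2 + (n*z.re*(z^(n-1)).re)^2 := by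
  rw [jacC_un, frobSq_fin_two]

lemma grad_lower (n : ℕ) (z : ℂ) :
    ((n:ℝ)*z.re)^2 * (Complex.normSq z)^(n-1) ≤ frobSq (jacC (un n) z) := by
  rw [grad_formula, ← map_pow Complex.normSq z]
  simp only [Complex.normSq_apply]
  nlinarith [sq_nonneg ((z^n).re + n*z.re*(z^(n-1)).re), sq_nonneg ((z^n).im + n*z.re*(z^(n-1)).im)]

lemma grad_nonneg (n : ℕ) (z : ℂ) : 0 ≤ frobSq (jacC (un n) z) := by
  rw [grad_formula]; positivity

lemma continuous_grad (n : ℕ) : Continuous (fun z => frobSq (jacC (un n) z)) := by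
  simp only [grad_formula]
  fun_prop

lemma continuous_devSym (n : ℕ) : Continuous (fun z => frobSq (dev (symP (jacC (un n) z)))) := by
  simp only [devSym_formula]
  exact (Complex.continuous_normSq.pow n).div_const 2

/-! ### The domain -/

lemma halfDisk_subset_ball : halfDisk ⊆ Metric.ball (0:ℂ) 1 := by
  intro z hz
  simpa [Metric.mem_ball, Complex.dist_eq] using hz.1

lemma isOpen_halfDisk : IsOpen halfDisk :=
  (isOpen_lt continuous_norm continuous_const).inter
    (isOpen_lt continuous_const Complex.continuous_re)

lemma measurableSet_halfDisk : MeasurableSet halfDisk := isOpen_halfDisk.measurableSet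

lemma volume_halfDisk_lt_top : volume halfDisk < ⊤ :=
  lt_of_le_of_lt (measure_mono halfDisk_subset_ball) measure_ball_lt_top

lemma integrableOn_of_continuous {f : ℂ → ℝ} (hf : Continuous f) :
    IntegrableOn f halfDisk := by
  have : IntegrableOn f (Metric.closedBall (0:ℂ) 1) :=
    hf.continuousOn.integrableOn_compact (isCompact_closedBall _ _)
  exact this.mono_set (halfDisk_subset_ball.trans Metric.ball_subset_closedBall)

/-! ### The small-term integral tends to 0 -/

lemma tendsto_devSym_zero :
    Tendsto (fun n : ℕ => ∫ z in halfDisk, frobSq (dev (symP (jacC (un n) z))))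
      atTop (nhds 0) := by
  simp only [devSym_formula]
  have h0 : (0:ℝ) = ∫ z in halfDisk, (0:ℝ) := by simp
  rw [h0]
  apply MeasureTheory.tendsto_integral_of_dominated_convergence (fun _ => (1:ℝ)/2)
  · intro n
    exact ((Complex.continuous_normSq.pow n).div_const 2).aestronglyMeasurable
  · exact integrableOn_const volume_halfDisk_lt_top.ne
  · intro n
    filter_upwards [ae_restrict_mem measurableSet_halfDisk] with z hz
    have h1 : Complex.normSq z < 1 := by
      have := hz.1
      rw [← Complex.sq_norm]
      nlinarith [norm_nonneg z]
    have h2 : (0:ℝ) ≤ Complex.normSq z := Complex.normSq_nonneg z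
    rw [Real.norm_eq_abs, _root_.abs_of_nonneg (by positivity)]
    have : Complex.normSq z ^ n ≤ 1 := pow_le_one₀ h2 h1.le
    linarith
  · filter_upwards [ae_restrict_mem measurableSet_halfDisk] with z hz
    have h1 : Complex.normSq z < 1 := by
      have := hz.1
      rw [← Complex.sq_norm]
      nlinarith [norm_nonneg z]
    have := (tendsto_pow_atTop_nhds_zero_of_lt_one (Complex.normSq_nonneg z) h1).div_const 2
    simpa using this


def rect (n : ℕ) : Set ℂ :=
  {z : ℂ | z.re ∈ Set.Ioo (1 - (n:ℝ)⁻¹) (Real.sqrt (1 - (n:ℝ)⁻¹)) ∧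
           z.im ∈ Set.Ioo 0 (Real.sqrt (n:ℝ)⁻¹)}

lemma rect_eq (n : ℕ) : rect n = Complex.measurableEquivRealProd ⁻¹'
    ((Set.Ioo (1 - (n:ℝ)⁻¹) (Real.sqrt (1 - (n:ℝ)⁻¹))) ×ˢ (Set.Ioo 0 (Real.sqrt (n:ℝ)⁻¹))) := by
  ext z
  simp [rect, Complex.measurableEquivRealProd_apply, Set.mem_prod]

lemma measurableSet_rect (n : ℕ) : MeasurableSet (rect n) := by
  rw [rect_eq]
  exact Complex.measurableEquivRealProd.measurable (measurableSet_Ioo.prod measurableSet_Ioo)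

lemma volume_rect (n : ℕ) : volume (rect n) =
    ENNReal.ofReal (Real.sqrt (1 - (n:ℝ)⁻¹) - (1 - (n:ℝ)⁻¹)) * ENNReal.ofReal (Real.sqrt (n:ℝ)⁻¹) := by
  rw [rect_eq, Complex.volume_preserving_equiv_real_prod.measure_preimage
    (measurableSet_Ioo.prod measurableSet_Ioo).nullMeasurableSet]
  rw [Measure.volume_eq_prod, Measure.prod_prod, Real.volume_Ioo, Real.volume_Ioo, sub_zero]
lemma aux_sqrt {t : ℝ} (h0 : 0 < t) (h2 : t ≤ 1/2) :
    t/3 ≤ Real.sqrt (1-t) - (1-t) := by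
  have h1t : (0:ℝ) ≤ 1 - t := by linarith
  set s := Real.sqrt (1-t) with hs
  have hsq : s^2 = 1 - t := Real.sq_sqrt h1t
  have hs0 : 0 ≤ s := Real.sqrt_nonneg _
  have hs1 : s ≤ 1 := by nlinarith
  have hs2 : 1/2 ≤ s := by nlinarith
  nlinarith

lemma aux_exp {t : ℝ} (h0 : 0 < t) (h2 : t ≤ 1/2) : Real.exp (-(2*t)) ≤ 1 - t := by
  have h1 : 2*t + 1 ≤ Real.exp (2*t) := Real.add_one_le_exp (2*t)
  have h3 : Real.exp (-(2*t)) = (Real.exp (2*t))⁻¹ := by rw [Real.exp_neg]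
  rw [h3]
  rw [inv_le_comm₀ (Real.exp_pos _) (by linarith)]
  calc (1-t)⁻¹ ≤ 1 + 2*t := by
        rw [inv_le_comm₀ (by linarith) (by positivity)]
        rw [inv_le_iff_one_le_mul₀ (by positivity)]  -- might fail; fallback below
        nlinarith
    _ ≤ Real.exp (2*t) := by linarith
lemma aux_exp4 : (1:ℝ)/64 ≤ Real.exp (-4) := by
  have h : Real.exp 4 ≤ 64 := by
    have h1 : Real.exp 1 < 2.7182818286 := Real.exp_one_lt_d9
    have h4 : Real.exp 4 = (Real.exp 1)^4 := by
      rw [← Real.exp_nat_mul]; norm_num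
    rw [h4]
    calc (Real.exp 1)^4 ≤ 2.7182818286^4 := pow_le_pow_left₀ (Real.exp_pos 1).le h1.le 4
      _ ≤ 64 := by norm_num
  rw [Real.exp_neg, one_div]
  exact inv_anti₀ (Real.exp_pos 4) h

-- pointwise bounds on the rectangle
set_option maxHeartbeats 1000000 in
lemma rect_bounds {n : ℕ} (hn : 2 ≤ n) {z : ℂ} (hz : z ∈ rect n) :
    (‖z‖ < 1 ∧ 0 < z.re) ∧
    ((n:ℝ))^2/256 ≤ ((n:ℝ)*z.re)^2 * (Complex.normSq z)^(n-1) := by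
  simp only [rect, Set.mem_setOf_eq, Set.mem_Ioo] at hz
  obtain ⟨⟨hx1, hx2⟩, hy1, hy2⟩ := hz
  set t : ℝ := (n:ℝ)⁻¹ with ht
  have hn0 : (0:ℝ) < n := by
    have : 0 < n := by omega
    exact_mod_cast this
  have ht0 : 0 < t := by positivity
  have ht2 : t ≤ 1/2 := by
    rw [ht, inv_le_comm₀ hn0 (by norm_num)]
    norm_num; exact_mod_cast hn
  have h1t : (0:ℝ) ≤ 1 - t := by linarith
  have hx0 : 0 < z.re := by linarith
  have hxsq : z.re^2 < 1 - t := by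
    have := Real.sq_sqrt h1t
    nlinarith [Real.sqrt_nonneg (1-t)]
  have hysq : z.im^2 < t := by
    have := Real.sq_sqrt ht0.le
    nlinarith [Real.sqrt_nonneg t]
  have hns : Complex.normSq z = z.re^2 + z.im^2 := by
    rw [Complex.normSq_apply]; ring
  have habs : ‖z‖ < 1 := by
    nlinarith [Complex.sq_norm z, norm_nonneg z]
  refine ⟨⟨habs, hx0⟩, ?_⟩
  -- lower bound
  have hxl : 1 - t ≤ z.re := hx1.le
  have hx14 : (1:ℝ)/4 ≤ z.re^2 := by nlinarith
  have hnsl : (1-t)^2 ≤ Complex.normSq z := by nlinarith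
  have hexp : Real.exp (-(2*t)) ≤ 1 - t := aux_exp ht0 ht2
  have hpow : Real.exp (-4) ≤ (Complex.normSq z)^(n-1) := by
    have e1 : ((1-t)^2)^(n-1) ≤ (Complex.normSq z)^(n-1) :=
      pow_le_pow_left₀ (by positivity) hnsl _
    have e2 : ((1-t)^2)^(n-1) = (1-t)^(2*(n-1)) := by rw [← pow_mul]
    have e3 : (1-t)^(2*n) ≤ (1-t)^(2*(n-1)) :=
      pow_le_pow_of_le_one h1t (by linarith) (by omega)
    have e4 : (Real.exp (-(2*t)))^(2*n) ≤ (1-t)^(2*n) :=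
      pow_le_pow_left₀ (Real.exp_pos _).le hexp _
    have e5 : (Real.exp (-(2*t)))^(2*n) = Real.exp (-4) := by
      rw [← Real.exp_nat_mul]
      congr 1
      push_cast
      linear_combination (-4 : ℝ) * (mul_inv_cancel₀ hn0.ne' : (n:ℝ)*(n:ℝ)⁻¹ = 1)
    calc Real.exp (-4) = (Real.exp (-(2*t)))^(2*n) := e5.symm
      _ ≤ (1-t)^(2*n) := e4
      _ ≤ (1-t)^(2*(n-1)) := e3
      _ = ((1-t)^2)^(n-1) := e2.symm
      _ ≤ (Complex.normSq z)^(n-1) := e1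
  have h64 : (1:ℝ)/64 ≤ (Complex.normSq z)^(n-1) := le_trans aux_exp4 hpow
  have : ((n:ℝ)*z.re)^2 = (n:ℝ)^2 * z.re^2 := by ring
  rw [this]
  have hq : (n:ℝ)^2/4 ≤ (n:ℝ)^2 * z.re^2 := by nlinarith
  calc (n:ℝ)^2/256 = ((n:ℝ)^2/4)*(1/64) := by ring
    _ ≤ ((n:ℝ)^2 * z.re^2) * ((Complex.normSq z)^(n-1)) :=
        mul_le_mul hq h64 (by norm_num) (by positivity)

lemma rect_subset {n : ℕ} (hn : 2 ≤ n) : rect n ⊆ halfDisk :=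
  fun z hz => (rect_bounds hn hz).1

lemma integral_lower {n : ℕ} (hn : 2 ≤ n) :
    Real.sqrt n / 768 ≤ ∫ z in halfDisk, frobSq (jacC (un n) z) := by
  have hn0 : (0:ℝ) < n := by
    have : 0 < n := by omega
    exact_mod_cast this
  set t : ℝ := (n:ℝ)⁻¹ with ht
  have ht0 : 0 < t := by positivity
  have ht2 : t ≤ 1/2 := by
    rw [ht, inv_le_comm₀ hn0 (by norm_num)]
    norm_num; exact_mod_cast hn
  have hint : IntegrableOn (fun z => frobSq (jacC (un n) z)) halfDisk volume :=
    integrableOn_of_continuous (continuous_grad n)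
  have hvolne : volume (rect n) ≠ ⊤ := by
    rw [volume_rect]
    exact ENNReal.mul_ne_top ENNReal.ofReal_ne_top ENNReal.ofReal_ne_top
  have h1 : ((n:ℝ)^2/256) * (volume (rect n)).toReal ≤
      ∫ z in rect n, frobSq (jacC (un n) z) := by
    apply setIntegral_ge_of_const_le_real (measurableSet_rect n) hvolne
    · intro z hz
      exact le_trans (rect_bounds hn hz).2 (grad_lower n z)
    · exact hint.mono_set (rect_subset hn)
  have h2 : (∫ z in rect n, frobSq (jacC (un n) z)) ≤
      ∫ z in halfDisk, frobSq (jacC (un n) z) := by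
    apply setIntegral_mono_set hint
    · exact Filter.Eventually.of_forall (fun z => grad_nonneg n z)
    · exact (rect_subset hn).eventuallyLE
  have hsa : t/3 ≤ Real.sqrt (1-t) - (1-t) := aux_sqrt ht0 ht2
  have hvol : (volume (rect n)).toReal = (Real.sqrt (1-t) - (1-t)) * Real.sqrt t := by
    rw [volume_rect, ENNReal.toReal_mul, ENNReal.toReal_ofReal (by nlinarith),
      ENNReal.toReal_ofReal (Real.sqrt_nonneg _)]
  have hvlb : t/3 * Real.sqrt t ≤ (volume (rect n)).toReal := by
    rw [hvol]
    exact mul_le_mul_of_nonneg_right hsa (Real.sqrt_nonneg _)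
  have heq : (n:ℝ)^2/256 * (t/3 * Real.sqrt t) = Real.sqrt n / 768 := by
    rw [ht, Real.sqrt_inv]
    have hms : Real.sqrt n * Real.sqrt n = (n:ℝ) := Real.mul_self_sqrt hn0.le
    have hsn : (0:ℝ) < Real.sqrt n := Real.sqrt_pos.mpr hn0
    field_simp
    nlinarith [hms, hsn]
  calc Real.sqrt n / 768 = (n:ℝ)^2/256 * (t/3 * Real.sqrt t) := heq.symm
    _ ≤ (n:ℝ)^2/256 * (volume (rect n)).toReal :=
        mul_le_mul_of_nonneg_left hvlb (by positivity)
    _ ≤ ∫ z in rect n, frobSq (jacC (un n) z) := h1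
    _ ≤ ∫ z in halfDisk, frobSq (jacC (un n) z) := h2

lemma tendsto_sqrt_div : Tendsto (fun n : ℕ => Real.sqrt n / 768) atTop atTop := by
  rw [tendsto_atTop]
  intro b
  filter_upwards [eventually_ge_atTop (⌈(768*b)^2⌉₊)] with n hn
  have h1 : ((768:ℝ)*b)^2 ≤ (n:ℝ) := le_trans (Nat.le_ceil _) (by exact_mod_cast hn)
  have h2 : |768*b| ≤ Real.sqrt n := by
    rw [← Real.sqrt_sq_eq_abs]
    exact Real.sqrt_le_sqrt h1
  have h3 : 768*b ≤ Real.sqrt n := le_trans (le_abs_self _) h2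
  linarith

lemma contDiff_un (n : ℕ) : ContDiff ℝ (⊤ : ℕ∞) (un n) := by
  unfold un
  exact ((Complex.ofRealCLM.comp Complex.reCLM).contDiff).mul (contDiff_id.pow n)

lemma un_vanish (n : ℕ) : ∀ z : ℂ, z.re = 0 → un n z = 0 := by
  intro z hz
  simp [un, hz]

lemma tendsto_grad_atTop :
    Tendsto (fun n : ℕ => ∫ z in halfDisk, frobSq (jacC (un n) z)) atTop atTop := by
  apply tendsto_atTop_mono' atTop _ tendsto_sqrt_div
  filter_upwards [eventually_ge_atTop 2] with n hn
  exact integral_lower hn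

/-- Section 6.6: the trace-free Korn inequality with only a partial boundary condition
is false for n = 2; witnesses are the maps u_n(z) = (Re z)·zⁿ, which vanish on the
imaginary axis, whose Dirichlet energies blow up while the trace-free symmetric gradient
energies tend to zero. -/
theorem no_devSymGrad_inequality_dim2 :
    (¬ ∃ C > (0 : ℝ), ∀ v : ℂ → ℂ,
        ContDiff ℝ (⊤ : ℕ∞) v → (∀ z : ℂ, z.re = 0 → v z = 0) →
        (∫ z in halfDisk, frobSq (jacC v z)) ≤
          C * ∫ z in halfDisk, frobSq (dev (symP (jacC v z)))) ∧
    (∀ n : ℕ, ContDiff ℝ (⊤ : ℕ∞) (un n) ∧ ∀ z : ℂ, z.re = 0 → un n z = 0) ∧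
    Tendsto (fun n : ℕ => ∫ z in halfDisk, frobSq (jacC (un n) z)) atTop atTop ∧
    Tendsto (fun n : ℕ => ∫ z in halfDisk, frobSq (dev (symP (jacC (un n) z))))
      atTop (nhds 0) := by
  refine ⟨?_, fun n => ⟨contDiff_un n, un_vanish n⟩, tendsto_grad_atTop, tendsto_devSym_zero⟩
  rintro ⟨C, hC0, hC⟩
  have hineq : ∀ n : ℕ, (∫ z in halfDisk, frobSq (jacC (un n) z)) ≤
      C * ∫ z in halfDisk, frobSq (dev (symP (jacC (un n) z))) :=
    fun n => hC (un n) (contDiff_un n) (un_vanish n)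
  have h2 : Tendsto (fun n : ℕ =>
      C * ∫ z in halfDisk, frobSq (dev (symP (jacC (un n) z)))) atTop (nhds (C * 0)) :=
    tendsto_devSym_zero.const_mul C
  rw [mul_zero] at h2
  exact not_tendsto_atTop_of_tendsto_nhds h2 (tendsto_atTop_mono hineq tendsto_grad_atTop)
end
end
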